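/- arXiv:2106.06423 — 2 statements merged into one kernel-verified Lean document; each statement's English description precedes it below -/
import Mathlib

section
/- Let A and B be finite-dimensional k-algebras over an algebraically closed field k, with complete sets of primitive orthogonal idempotents {e_1^A,...,e_n^A} and {e_1^B,...,e_m^B} respectively. Then the set {e_i^A ⊗ e_j^B : 1 ≤ i ≤ n, 1 ≤ j ≤ m} is a complete set of primitive orthogonal idempotents of the tensor product algebra A ⊗_k B. -/
variable {k : Type} [Field k] {A : Type} [Ring A] [Algebra k A]

/-- The corner submodule `eAe`. -/
def cornerSub (k : Type) [Field k] {A : Type} [Ring A] [Algebra k A] (e : A) : Submodule k A where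
  carrier := {x | e * x = x ∧ x * e = x}
  add_mem' := by rintro a b ⟨h1, h2⟩ ⟨h3, h4⟩; constructor <;> simp [mul_add, add_mul, *]
  zero_mem' := by simp
  smul_mem' := by rintro c a ⟨h1, h2⟩; constructor <;> simp [mul_smul_comm, smul_mul_assoc, *]

def Corner (k : Type) [Field k] {A : Type} [Ring A] [Algebra k A]
    (e : {x : A // IsIdempotentElem x}) : Type := ↥(cornerSub k e.1)

namespace Corner

variable (e : {x : A // IsIdempotentElem x})

instance : AddCommGroup (Corner k e) := by unfold Corner; infer_instance
instance : Module k (Corner k e) := by unfold Corner; infer_instance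

def val (x : Corner k e) : A := Subtype.val x

def mk (x : A) (h : x ∈ cornerSub k e.1) : Corner k e := ⟨x, h⟩

@[simp] lemma val_mk (x : A) (h : x ∈ cornerSub k e.1) : (mk e x h).val = x := rfl

lemma val_mem (x : Corner k e) : x.val ∈ cornerSub k e.1 := x.2

@[ext] lemma ext {x y : Corner k e} (h : x.val = y.val) : x = y := Subtype.ext h

lemma prop (x : Corner k e) : e.1 * x.val = x.val ∧ x.val * e.1 = x.val := x.2

instance : Mul (Corner k e) :=
  ⟨fun x y => ⟨x.val * y.val, by
    obtain ⟨h1, h2⟩ := x.prop; obtain ⟨h3, h4⟩ := y.prop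
    constructor
    · rw [← mul_assoc, h1]
    · rw [mul_assoc, h4]⟩⟩

instance : One (Corner k e) := ⟨⟨e.1, by simp [cornerSub, e.2.eq]⟩⟩

@[simp] lemma val_mul (x y : Corner k e) : (x * y).val = x.val * y.val := rfl
@[simp] lemma val_one : (1 : Corner k e).val = e.1 := rfl
@[simp] lemma val_zero : (0 : Corner k e).val = 0 := rfl
@[simp] lemma val_add (x y : Corner k e) : (x + y).val = x.val + y.val := rfl
@[simp] lemma val_sub (x y : Corner k e) : (x - y).val = x.val - y.val := rfl
@[simp] lemma val_smul (c : k) (x : Corner k e) : (c • x).val = c • x.val := rfl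

instance : Ring (Corner k e) :=
  { (inferInstance : AddCommGroup (Corner k e)) with
    mul := (· * ·)
    one := 1
    mul_assoc := fun x y z => by ext; simp [mul_assoc]
    one_mul := fun x => by ext; simp [(prop e x).1]
    mul_one := fun x => by ext; simp [(prop e x).2]
    left_distrib := fun x y z => by ext; simp [mul_add]
    right_distrib := fun x y z => by ext; simp [add_mul]
    zero_mul := fun x => by ext; simp
    mul_zero := fun x => by ext; simp }

instance : Algebra k (Corner k e) :=
  Algebra.ofModule (fun c x y => by ext; simp [smul_mul_assoc])
    (fun c x y => by ext; simp [mul_smul_comm])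

instance [FiniteDimensional k A] : FiniteDimensional k (Corner k e) := by
  unfold Corner; infer_instance

@[simp] lemma val_pow_succ (x : Corner k e) (n : ℕ) : (x ^ (n + 1)).val = x.val ^ (n + 1) := by
  induction n with
  | zero => simp
  | succ n ih => rw [pow_succ, val_mul, ih, ← pow_succ]

lemma val_algebraMap (c : k) : (algebraMap k (Corner k e) c).val = c • e.1 := by
  rw [Algebra.algebraMap_eq_smul_one]; simp

end Corner

open Polynomial

variable {k : Type} [Field k] [IsAlgClosed k]

theorem lemA {C : Type} [Ring C] [Algebra k C] [FiniteDimensional k C] [Nontrivial C]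
    (h : ∀ a : C, a * a = a → a = 0 ∨ a = 1) (s : C) :
    ∃ lam : k, IsNilpotent (s - algebraMap k C lam) := by
  have hs : IsIntegral k s := .of_finite k s
  have hpmon : (minpoly k s).Monic := minpoly.monic hs
  have hpne : minpoly k s ≠ 0 := hpmon.ne_zero
  have hdeg : 0 < (minpoly k s).natDegree := minpoly.natDegree_pos hs
  obtain ⟨lam, hroot⟩ := IsAlgClosed.exists_root (minpoly k s)
    (by intro hd; rw [Polynomial.degree_eq_natDegree hpne] at hd; exact_mod_cast
      (by omega : (minpoly k s).natDegree ≠ 0) (by exact_mod_cast hd))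
  set m := (minpoly k s).rootMultiplicity lam with hm
  have hm1 : 1 ≤ m := (Polynomial.rootMultiplicity_pos hpne).2 hroot
  obtain ⟨q, hq, hqnd⟩ := (minpoly k s).exists_eq_pow_rootMultiplicity_mul_and_not_dvd hpne lam
  rw [← hm] at hq
  have hqne : q ≠ 0 := by rintro rfl; simp [mul_zero] at hq; exact hpne hq
  have hcop : IsCoprime ((X - Polynomial.C lam) ^ m) q :=
    ((Polynomial.irreducible_X_sub_C lam).coprime_iff_not_dvd.2 hqnd).pow_left
  obtain ⟨u, v, huv⟩ := hcop
  set a := aeval s (v * q) with ha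
  set b := aeval s (u * (X - Polynomial.C lam) ^ m) with hb
  have hab : a + b = 1 := by
    rw [ha, hb, ← map_add, add_comm (v * q), huv, map_one]
  have hab0 : a * b = 0 := by
    rw [ha, hb, ← map_mul]
    have : v * q * (u * (X - Polynomial.C lam) ^ m) = v * u * minpoly k s := by
      rw [hq]; ring
    rw [this, map_mul, minpoly.aeval, mul_zero]
  have haidem : a * a = a := by
    have h2 : a * a = a * (a + b) - a * b := by noncomm_ring
    rw [h2, hab, hab0, mul_one, sub_zero]
  have key : (s - algebraMap k C lam) ^ m = aeval s ((X - Polynomial.C lam) ^ m) := by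
    rw [map_pow, map_sub, aeval_X, aeval_C]
  rcases h a haidem with h0 | h1
  · exfalso
    have hb1 : b = 1 := by rw [h0, zero_add] at hab; exact hab
    have hq0 : aeval s q = 0 := by
      have h3 : aeval s q * b = aeval s (q * (u * (X - Polynomial.C lam) ^ m)) := by
        rw [hb, ← map_mul]
      rw [hb1, mul_one] at h3
      have h4 : q * (u * (X - Polynomial.C lam) ^ m) = u * minpoly k s := by rw [hq]; ring
      rw [h3, h4, map_mul, minpoly.aeval, mul_zero]
    have hdvd : minpoly k s ∣ q := minpoly.dvd k s hq0
    have hle : (minpoly k s).natDegree ≤ q.natDegree :=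
      Polynomial.natDegree_le_of_dvd hdvd hqne
    have hdm : (minpoly k s).natDegree = m * 1 + q.natDegree := by
      rw [hq, Polynomial.natDegree_mul (pow_ne_zero _ (Polynomial.X_sub_C_ne_zero lam)) hqne,
        Polynomial.natDegree_pow, Polynomial.natDegree_X_sub_C]
    omega
  · refine ⟨lam, m, ?_⟩
    have hb0 : b = 0 := by rw [h1] at hab; simpa using hab
    have hqunit : aeval s q * aeval s v = 1 := by
      rw [← map_mul, mul_comm, ← ha, h1]
    have hzero : aeval s ((X - Polynomial.C lam) ^ m) * aeval s q = 0 := by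
      rw [← map_mul, ← hq, minpoly.aeval]
    calc (s - algebraMap k C lam) ^ m
        = aeval s ((X - Polynomial.C lam) ^ m) * (aeval s q * aeval s v) := by
          rw [hqunit, mul_one, key]
      _ = (aeval s ((X - Polynomial.C lam) ^ m) * aeval s q) * aeval s v := by
          rw [mul_assoc]
      _ = 0 := by rw [hzero, zero_mul]

theorem lemB {C : Type} [Ring C] [Algebra k C]
    (h : ∀ s : C, ∃ lam : k, IsNilpotent (s - algebraMap k C lam)) (s : C) :
    IsUnit s ∨ IsNilpotent s := by
  obtain ⟨lam, hn⟩ := h s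
  rcases eq_or_ne lam 0 with rfl | hl
  · right; simpa using hn
  · left
    have h2 : s = algebraMap k C lam + (s - algebraMap k C lam) := by
      rw [add_comm]; exact (sub_add_cancel s _).symm
    rw [h2]
    exact hn.isUnit_add_left_of_commute ((isUnit_iff_ne_zero.2 hl).map (algebraMap k C))
      (Commute.sub_left (Algebra.commutes lam s).symm (Commute.refl _))

theorem nonunit_nilpotent {C : Type} [Ring C]
    (hUN : ∀ s : C, IsUnit s ∨ IsNilpotent s) {x : C} (hx : ¬ IsUnit x) : IsNilpotent x :=
  (hUN x).resolve_left hx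

theorem nilpotent_nonunit {C : Type} [Ring C] [Nontrivial C] {x : C}
    (hx : IsNilpotent x) : ¬ IsUnit x := by
  intro hu
  obtain ⟨n, hn⟩ := hx
  have h2 : IsUnit ((0 : C)) := hn ▸ hu.pow n
  exact not_isUnit_zero h2

theorem mul_nilpotent {C : Type} [Ring C] [Nontrivial C]
    (hUN : ∀ s : C, IsUnit s ∨ IsNilpotent s) {x : C} (hx : IsNilpotent x) (r : C) :
    IsNilpotent (r * x) ∧ IsNilpotent (x * r) := by
  obtain ⟨n, hn⟩ := hx
  constructor
  · refine nonunit_nilpotent hUN (fun hu => ?_)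
    obtain ⟨w, -, hw2⟩ := isUnit_iff_exists.1 hu
    have hlw : (w * r) * x = 1 := by rwa [← mul_assoc] at hw2
    have hall : ∀ i : ℕ, (w * r) ^ i * x ^ i = 1 := by
      intro i
      induction i with
      | zero => simp
      | succ i ih =>
        rw [pow_succ, pow_succ']
        calc (w * r) ^ i * (w * r) * (x * x ^ i)
            = (w * r) ^ i * (((w * r) * x) * x ^ i) := by
              rw [mul_assoc, ← mul_assoc (w * r) x]
          _ = 1 := by rw [hlw, one_mul, ih]
    have h1 := hall n
    rw [hn, mul_zero] at h1
    exact one_ne_zero h1.symm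
  · refine nonunit_nilpotent hUN (fun hu => ?_)
    obtain ⟨w, hw1, -⟩ := isUnit_iff_exists.1 hu
    have hrw : x * (r * w) = 1 := by rwa [mul_assoc] at hw1
    have hall : ∀ i : ℕ, x ^ i * (r * w) ^ i = 1 := by
      intro i
      induction i with
      | zero => simp
      | succ i ih =>
        rw [pow_succ', pow_succ]
        calc x * x ^ i * ((r * w) ^ i * (r * w))
            = x * ((x ^ i * (r * w) ^ i) * (r * w)) := by
              rw [mul_assoc, ← mul_assoc (x ^ i)]
          _ = 1 := by rw [ih, one_mul, hrw]
    have h1 := hall n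
    rw [hn, zero_mul] at h1
    exact one_ne_zero h1.symm

theorem nilpotent_add {C : Type} [Ring C] [Nontrivial C]
    (hUN : ∀ s : C, IsUnit s ∨ IsNilpotent s) {x y : C}
    (hx : IsNilpotent x) (hy : IsNilpotent y) : IsNilpotent (x + y) := by
  refine nonunit_nilpotent hUN (fun hu => ?_)
  obtain ⟨u, hu⟩ := hu
  have h1 : (u⁻¹ : Cˣ) * (x + y) = 1 := by rw [← hu]; exact u.inv_mul
  have hux : IsNilpotent ((u⁻¹ : Cˣ) * x) := (mul_nilpotent hUN hx _).1
  have h2 : IsUnit (1 - (u⁻¹ : Cˣ) * x) := hux.isUnit_one_sub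
  have h3 : (1 : C) - (u⁻¹ : Cˣ) * x = (u⁻¹ : Cˣ) * y := by
    rw [← h1]; noncomm_ring
  rw [h3] at h2
  have h4 : IsUnit y := by
    have h5 := (Units.isUnit u).mul h2
    rwa [← mul_assoc, u.mul_inv, one_mul] at h5
  exact nilpotent_nonunit hy h4

variable {k A : Type} [Field k] [Ring A] [Algebra k A]

/-- The auxiliary submodule `∑_{y ∈ s} N y`. -/
noncomputable def QQ (N : Submodule k A) (s : Finset A) : Submodule k A :=
  ∑ y ∈ s, N.map (LinearMap.mulRight k y)

lemma sum_submodule_le {ι : Type*} (t : Finset ι) (f : ι → Submodule k A) (K : Submodule k A)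
    (h : ∀ i ∈ t, f i ≤ K) : ∑ i ∈ t, f i ≤ K := by
  classical
  induction t using Finset.induction with
  | empty => simp
  | insert _ _ hx ih =>
    rename_i a t
    rw [Finset.sum_insert hx]
    rw [Submodule.add_eq_sup]
    exact sup_le (h a (Finset.mem_insert_self a t))
      (ih fun i hi => h i (Finset.mem_insert_of_mem hi))

lemma le_sum_submodule {ι : Type*} (t : Finset ι) (f : ι → Submodule k A) {i : ι} (hi : i ∈ t) :
    f i ≤ ∑ j ∈ t, f j := by
  classical
  induction t using Finset.induction with
  | empty => simp at hi
  | insert _ _ hx ih =>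
    rename_i a t
    rw [Finset.sum_insert hx, Submodule.add_eq_sup]
    rcases Finset.mem_insert.1 hi with rfl | hi'
    · exact le_sup_left
    · exact (ih hi').trans le_sup_right

lemma QQ_stab (N : Submodule k A) (SA : Submodule k A)
    (hmulN : ∀ r ∈ SA, ∀ x ∈ N, r * x ∈ N) (s : Finset A)
    {r : A} (hr : r ∈ SA) {z : A} (hz : z ∈ QQ N s) : r * z ∈ QQ N s := by
  have : QQ N s ≤ Submodule.comap (LinearMap.mulLeft k r) (QQ N s) := by
    apply sum_submodule_le
    intro y hy
    intro a ha
    obtain ⟨n, hn, rfl⟩ := ha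
    simp only [Submodule.mem_comap, LinearMap.mulLeft_apply, LinearMap.mulRight_apply]
    rw [← mul_assoc]
    exact le_sum_submodule s _ hy ⟨r * n, hmulN r hr n hn, rfl⟩
  exact this hz

theorem nak (e : A) (N SA : Submodule k A)
    (hNS : N ≤ SA)
    (hSA : ∀ x ∈ SA, e * x = x)
    (hmulN : ∀ r ∈ SA, ∀ x ∈ N, r * x ∈ N)
    (hF4 : ∀ m ∈ N, ∃ w ∈ SA, w * (e - m) = e) :
    ∀ s : Finset A, (∀ y ∈ s, e * y = y) → (∀ y ∈ s, y ∈ QQ N s) → ∀ y ∈ s, y = 0 := by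
  classical
  intro s
  induction s using Finset.strongInduction with
  | _ s ih =>
    intro hcor hmem
    rcases s.eq_empty_or_nonempty with rfl | ⟨x, hx⟩
    · intro y hy; simp at hy
    · -- decompose Q s
      have hdec : QQ N s = N.map (LinearMap.mulRight k x) ⊔ QQ N (s.erase x) := by
        rw [QQ, ← Finset.add_sum_erase s _ hx, Submodule.add_eq_sup]; rfl
      -- x ∈ Q erase
      have hxQ : x ∈ QQ N (s.erase x) := by
        have hx1 := hmem x hx
        rw [hdec] at hx1
        obtain ⟨v, hv, w, hw, hvw⟩ := Submodule.mem_sup.1 hx1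
        obtain ⟨mv, hmv, rfl⟩ := hv
        simp only [LinearMap.mulRight_apply] at hvw
        obtain ⟨w', hw'S, hw'⟩ := hF4 mv hmv
        have hex : (e - mv) * x = w := by
          rw [sub_mul, hcor x hx]
          exact (eq_sub_of_add_eq' hvw).symm
        have hxw : x = w' * w := by
          rw [← hex, ← mul_assoc, hw', hcor x hx]
        have hst := QQ_stab N SA hmulN (s.erase x) hw'S hw
        rwa [← hxw] at hst
      -- all other elements in Q erase
      have herase : ∀ z ∈ s.erase x, z ∈ QQ N (s.erase x) := by
        intro z hz
        have hz1 := hmem z (Finset.mem_of_mem_erase hz)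
        rw [hdec] at hz1
        obtain ⟨v, hv, w, hw, hvw⟩ := Submodule.mem_sup.1 hz1
        obtain ⟨mv, hmv, rfl⟩ := hv
        simp only [LinearMap.mulRight_apply] at hvw
        rw [← hvw]
        exact (QQ N (s.erase x)).add_mem (QQ_stab N SA hmulN _ (hNS hmv) hxQ) hw
      have hIH := ih (s.erase x) (Finset.erase_ssubset hx)
        (fun y hy => hcor y (Finset.mem_of_mem_erase hy)) herase
      -- Q erase = ⊥
      have hQbot : QQ N (s.erase x) = ⊥ := by
        rw [eq_bot_iff]
        apply sum_submodule_le
        intro y hy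
        have hy0 : y = 0 := hIH y hy
        subst hy0
        rintro a ⟨n, hn, rfl⟩
        simp
      have hx0 : x = 0 := by
        have := hxQ
        rw [hQbot] at this
        simpa using this
      intro y hy
      rcases eq_or_ne y x with rfl | hne
      · exact hx0
      · exact hIH y (Finset.mem_erase.2 ⟨hne, hy⟩)

theorem nilpotentN [FiniteDimensional k A] (e : A) (N SA : Submodule k A)
    (hNS : N ≤ SA)
    (hSA : ∀ x ∈ SA, e * x = x)
    (hmulN : ∀ r ∈ SA, ∀ x ∈ N, r * x ∈ N)
    (hmulN' : ∀ x ∈ N, ∀ r ∈ SA, x * r ∈ N)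
    (hF4 : ∀ m ∈ N, ∃ w ∈ SA, w * (e - m) = e) :
    ∃ t : ℕ, N ^ (t + 1) = ⊥ := by
  classical
  -- powers are antitone
  have hstep : ∀ i : ℕ, N ^ (i + 2) ≤ N ^ (i + 1) := by
    intro i
    rw [pow_succ]
    apply Submodule.mul_le.2
    intro m hm n hn
    -- m ∈ N^(i+1), n ∈ N; show m * n ∈ N^(i+1)
    clear hF4
    induction i generalizing m with
    | zero =>
      rw [pow_one] at hm ⊢
      exact hmulN' m hm n (hNS hn)
    | succ i ihh =>
      rw [pow_succ] at hm
      --  m ∈ N^(i+1) * N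
      refine Submodule.mul_induction_on hm ?_ ?_
      · intro a ha b hb
        rw [pow_succ, mul_assoc]
        exact Submodule.mul_mem_mul ha (hmulN' b hb n (hNS hn))
      · intro a b hha hhb
        rw [add_mul]
        exact (N ^ (i + 2)).add_mem hha hhb
  have hanti : ∀ i j : ℕ, i ≤ j → N ^ (j + 1) ≤ N ^ (i + 1) := by
    intro i j hij
    have := antitone_nat_of_succ_le (f := fun n => N ^ (n + 1)) (fun n => hstep n) hij
    exact this
  obtain ⟨n₀, hn₀⟩ := IsArtinian.monotone_stabilizes (R := k) (M := A)
    ⟨fun n => OrderDual.toDual (N ^ (n + 1)), fun a b hab => hanti a b hab⟩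
  have hstab : N ^ (n₀ + 1) = N ^ (n₀ + 2) := hn₀ (n₀ + 1) (by omega)
  set P := N ^ (n₀ + 1) with hP
  have hPN : P ≤ N := by
    have := hanti 0 n₀ (Nat.zero_le _)
    rwa [pow_one] at this
  obtain ⟨S, hS⟩ := (IsNoetherian.noetherian P : P.FG)
  have hScor : ∀ y ∈ S, e * y = y := by
    intro y hy
    have : y ∈ P := hS ▸ Submodule.subset_span hy
    exact hSA y (hNS (hPN this))
  have hSQ : ∀ y ∈ S, y ∈ QQ N S := by
    intro y hy
    have hyP : y ∈ P := hS ▸ Submodule.subset_span hy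
    have hyNP : y ∈ N * P := by
      rw [hP, ← pow_succ']
      exact hstab ▸ hyP
    have hle : N * P ≤ QQ N S := by
      rw [← hS]
      apply Submodule.mul_le.2
      intro n hn z hz
      refine Submodule.span_induction ?_ ?_ ?_ ?_ hz
      · intro y' hy'
        exact le_sum_submodule S _ hy' ⟨n, hn, rfl⟩
      · simp
      · intro a b _ _ hha hhb
        rw [mul_add]; exact (QQ N S).add_mem hha hhb
      · intro c a _ hha
        rw [mul_smul_comm]; exact (QQ N S).smul_mem c hha
    exact hle hyNP
  have hzero := nak e N SA hNS hSA hmulN hF4 S hScor hSQ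
  refine ⟨n₀, ?_⟩
  show P = ⊥
  rw [← hS, eq_bot_iff, Submodule.span_le]
  intro y hy
  simp [hzero y hy]

lemma mem_cornerSub {k : Type} [Field k] {A : Type} [Ring A] [Algebra k A] {e x : A} :
    x ∈ cornerSub k e ↔ e * x = x ∧ x * e = x := Iff.rfl

namespace Corner

variable {k : Type} [Field k] {A : Type} [Ring A] [Algebra k A]
variable {e : {x : A // IsIdempotentElem x}}

lemma isNilpotent_val_iff (x : Corner k e) : IsNilpotent x.val ↔ IsNilpotent x := by
  constructor
  · rintro ⟨n, hn⟩
    refine ⟨n + 1, ?_⟩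
    apply ext
    rw [val_pow_succ, pow_succ, hn, zero_mul, val_zero]
  · rintro ⟨n, hn⟩
    refine ⟨n + 1, ?_⟩
    rw [← val_pow_succ, pow_succ, hn, zero_mul, val_zero]

end Corner

theorem corner_package {k A : Type} [Field k] [IsAlgClosed k] [Ring A] [Algebra k A]
    [FiniteDimensional k A] (e : A) (he : IsIdempotentElem e) (hne : e ≠ 0)
    (hprim : ∀ a : A, a * a = a → e * a = a → a * e = a → a = 0 ∨ a = e) :
    ∃ (N : Submodule k A) (t : ℕ),
      (N ≤ cornerSub k e) ∧
      (∀ r ∈ cornerSub k e, ∀ x ∈ N, r * x ∈ N) ∧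
      (∀ x ∈ N, ∀ r ∈ cornerSub k e, x * r ∈ N) ∧
      (∀ x ∈ cornerSub k e, ∃ lam : k, x - lam • e ∈ N) ∧
      N ^ (t + 1) = ⊥ := by
  classical
  set E : {x : A // IsIdempotentElem x} := ⟨e, he⟩ with hE
  haveI : Nontrivial (Corner k E) :=
    ⟨⟨0, 1, fun h => hne (by simpa using congrArg (Corner.val E) h.symm)⟩⟩
  -- idempotents of the corner ring are trivial
  have hidem : ∀ a : Corner k E, a * a = a → a = 0 ∨ a = 1 := by
    intro a ha
    have h1 : a.val * a.val = a.val := by rw [← Corner.val_mul, ha]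
    rcases hprim a.val h1 (Corner.prop E a).1 (Corner.prop E a).2 with h | h
    · left; apply Corner.ext; simpa using h
    · right; apply Corner.ext; simpa using h
  have hloc : ∀ s : Corner k E, ∃ lam : k, IsNilpotent (s - algebraMap k (Corner k E) lam) :=
    fun s => by
      have := Corner.instFiniteDimensional (k := k) E
      exact @lemA k _ _ (Corner k E) _ _ this _ hidem s
  have hUN : ∀ s : Corner k E, IsUnit s ∨ IsNilpotent s := fun s => lemB hloc s
  -- the submodule of nilpotents of the corner
  have mkC : ∀ x : A, x ∈ cornerSub k e → Corner k E := fun x hx => ⟨x, hx⟩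
  set N : Submodule k A :=
    { carrier := {x | (e * x = x ∧ x * e = x) ∧ IsNilpotent x}
      zero_mem' := by refine ⟨⟨by simp, by simp⟩, ⟨1, by simp⟩⟩
      add_mem' := by
        rintro a b ⟨⟨ha1, ha2⟩, hna⟩ ⟨⟨hb1, hb2⟩, hnb⟩
        refine ⟨⟨by simp [mul_add, ha1, hb1], by simp [add_mul, ha2, hb2]⟩, ?_⟩
        have hca : IsNilpotent (Corner.mk (k := k) E a ⟨ha1, ha2⟩) :=
          (Corner.isNilpotent_val_iff _).1 hna
        have hcb : IsNilpotent (Corner.mk (k := k) E b ⟨hb1, hb2⟩) :=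
          (Corner.isNilpotent_val_iff _).1 hnb
        have := nilpotent_add hUN hca hcb
        exact (Corner.isNilpotent_val_iff ((Corner.mk (k := k) E a ⟨ha1, ha2⟩)
          + Corner.mk (k := k) E b ⟨hb1, hb2⟩)).2 this
      smul_mem' := by
        rintro c a ⟨⟨ha1, ha2⟩, n, hn⟩
        refine ⟨⟨by simp [mul_smul_comm, ha1], by simp [smul_mul_assoc, ha2]⟩, n, ?_⟩
        rw [_root_.smul_pow, hn, smul_zero] } with hN
  have hmem : ∀ x : A, x ∈ N ↔ (e * x = x ∧ x * e = x) ∧ IsNilpotent x := fun _ => Iff.rfl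
  have hNS : N ≤ cornerSub k e := fun x hx => ((hmem x).1 hx).1
  have hmulN : ∀ r ∈ cornerSub k e, ∀ x ∈ N, r * x ∈ N := by
    intro r hr x hx
    obtain ⟨⟨hx1, hx2⟩, hnx⟩ := (hmem x).1 hx
    refine (hmem _).2 ⟨⟨?_, ?_⟩, ?_⟩
    · rw [← mul_assoc, hr.1]
    · rw [mul_assoc, hx2]
    · have h := (mul_nilpotent hUN ((Corner.isNilpotent_val_iff
        (Corner.mk (k := k) E x ⟨hx1, hx2⟩)).1 hnx) (Corner.mk (k := k) E r hr)).1
      exact (Corner.isNilpotent_val_iff ((Corner.mk (k := k) E r hr) * Corner.mk (k := k) E x ⟨hx1, hx2⟩)).2 h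
  have hmulN' : ∀ x ∈ N, ∀ r ∈ cornerSub k e, x * r ∈ N := by
    intro x hx r hr
    obtain ⟨⟨hx1, hx2⟩, hnx⟩ := (hmem x).1 hx
    refine (hmem _).2 ⟨⟨?_, ?_⟩, ?_⟩
    · rw [← mul_assoc, hx1]
    · rw [mul_assoc, hr.2]
    · have h := (mul_nilpotent hUN ((Corner.isNilpotent_val_iff
        (Corner.mk (k := k) E x ⟨hx1, hx2⟩)).1 hnx) (Corner.mk (k := k) E r hr)).2
      exact (Corner.isNilpotent_val_iff ((Corner.mk (k := k) E x ⟨hx1, hx2⟩) * Corner.mk (k := k) E r hr)).2 h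
  have hdecomp : ∀ x ∈ cornerSub k e, ∃ lam : k, x - lam • e ∈ N := by
    intro x hx
    obtain ⟨lam, hn⟩ := hloc (Corner.mk (k := k) E x hx)
    refine ⟨lam, (hmem _).2 ⟨⟨?_, ?_⟩, ?_⟩⟩
    · rw [mul_sub, hx.1, mul_smul_comm, he.eq]
    · rw [sub_mul, hx.2, smul_mul_assoc, he.eq]
    · have hval : ((Corner.mk (k := k) E x hx) - algebraMap k (Corner k E) lam).val
          = x - lam • e := by
        rw [Corner.val_sub, Corner.val_algebraMap]
        rfl
      rw [← hval]
      exact (Corner.isNilpotent_val_iff _).2 hn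
  have hF4 : ∀ m ∈ N, ∃ w ∈ cornerSub k e, w * (e - m) = e := by
    intro m hm
    obtain ⟨⟨hm1, hm2⟩, hnm⟩ := (hmem m).1 hm
    have hcn : IsNilpotent (Corner.mk (k := k) E m ⟨hm1, hm2⟩) :=
      (Corner.isNilpotent_val_iff _).1 hnm
    have hu : IsUnit ((1 : Corner k E) - Corner.mk (k := k) E m ⟨hm1, hm2⟩) := hcn.isUnit_one_sub
    obtain ⟨w, -, hw2⟩ := isUnit_iff_exists.1 hu
    refine ⟨w.val, w.2, ?_⟩
    have := congrArg (Corner.val E) hw2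
    exact this
  obtain ⟨t, ht⟩ := nilpotentN e N (cornerSub k e) hNS (fun x hx => hx.1) hmulN hmulN' hF4
  exact ⟨N, t, hNS, hmulN, hmulN', hdecomp, ht⟩

open scoped TensorProduct

section Tensor

variable {k A B : Type} [Field k] [Ring A] [Algebra k A] [Ring B] [Algebra k B]

/-- Submodule of `A ⊗ B` spanned by tensors from `M` and `P`. -/
noncomputable def TT (M : Submodule k A) (P : Submodule k B) : Submodule k (A ⊗[k] B) :=
  LinearMap.range (TensorProduct.map M.subtype P.subtype)

lemma mem_TT {M : Submodule k A} {P : Submodule k B} {x : A} {y : B}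
    (hx : x ∈ M) (hy : y ∈ P) : x ⊗ₜ[k] y ∈ TT M P :=
  ⟨(⟨x, hx⟩ : M) ⊗ₜ[k] (⟨y, hy⟩ : P), by simp [TensorProduct.map_tmul]⟩

lemma TT_le {M : Submodule k A} {P : Submodule k B} {K : Submodule k (A ⊗[k] B)}
    (h : ∀ x ∈ M, ∀ y ∈ P, x ⊗ₜ[k] y ∈ K) : TT M P ≤ K := by
  rintro z ⟨w, rfl⟩
  induction w using TensorProduct.induction_on with
  | zero => simp only [map_zero]; exact K.zero_mem
  | tmul x y => simpa [TensorProduct.map_tmul] using h x.1 x.2 y.1 y.2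
  | add w₁ w₂ ih₁ ih₂ => rw [map_add]; exact K.add_mem ih₁ ih₂

lemma TT_mono {M M' : Submodule k A} {P P' : Submodule k B} (hM : M ≤ M') (hP : P ≤ P') :
    TT M P ≤ TT M' P' :=
  TT_le fun x hx y hy => mem_TT (hM hx) (hP hy)

lemma TT_mul {M M' : Submodule k A} {P P' : Submodule k B} :
    TT M P * TT M' P' ≤ TT (M * M') (P * P') := by
  apply Submodule.mul_le.2
  intro a ha b hb
  have key : ∀ x ∈ M, ∀ y ∈ P, (x ⊗ₜ[k] y) * b ∈ TT (M * M') (P * P') := by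
    intro x hx y hy
    have h2 : TT M' P' ≤
        Submodule.comap (LinearMap.mulLeft k (x ⊗ₜ[k] y)) (TT (M * M') (P * P')) := by
      apply TT_le
      intro x' hx' y' hy'
      simp only [Submodule.mem_comap, LinearMap.mulLeft_apply,
        Algebra.TensorProduct.tmul_mul_tmul]
      exact mem_TT (Submodule.mul_mem_mul hx hx') (Submodule.mul_mem_mul hy hy')
    exact h2 hb
  have h3 : TT M P ≤ Submodule.comap (LinearMap.mulRight k b) (TT (M * M') (P * P')) := by
    apply TT_le
    intro x hx y hy
    simpa only [Submodule.mem_comap, LinearMap.mulRight_apply] using key x hx y hy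
  exact h3 ha

lemma TT_bot_left {P : Submodule k B} : TT (⊥ : Submodule k A) P ≤ ⊥ := by
  apply TT_le
  intro x hx y hy
  have : x = 0 := by simpa using hx
  simp [this]

lemma TT_bot_right {M : Submodule k A} : TT M (⊥ : Submodule k B) ≤ ⊥ := by
  apply TT_le
  intro x hx y hy
  have : y = 0 := by simpa using hy
  simp [this]

lemma tmul_ne_zero {e : A} {f : B} (hne : e ≠ 0) (hnf : f ≠ 0) : e ⊗ₜ[k] f ≠ 0 := by
  have h1 : ¬ ∀ φ : Module.Dual k A, φ e = 0 := by
    rw [Module.forall_dual_apply_eq_zero_iff]; exact hne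
  have h2 : ¬ ∀ ψ : Module.Dual k B, ψ f = 0 := by
    rw [Module.forall_dual_apply_eq_zero_iff]; exact hnf
  push_neg at h1 h2
  obtain ⟨φ, hφ⟩ := h1
  obtain ⟨ψ, hψ⟩ := h2
  intro h0
  have := congrArg ((LinearMap.mul' k k).comp (TensorProduct.map φ ψ)) h0
  simp only [map_zero, LinearMap.comp_apply, TensorProduct.map_tmul, LinearMap.mul'_apply] at this
  exact hφ (by
    rcases mul_eq_zero.1 this with h | h
    · exact h
    · exact absurd h hψ)

end Tensor

section Main

variable {k A B : Type} [Field k] [IsAlgClosed k]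
  [Ring A] [Algebra k A] [FiniteDimensional k A]
  [Ring B] [Algebra k B] [FiniteDimensional k B]

set_option maxHeartbeats 1000000 in
theorem tensor_rel_prim (e : A) (f : B) (he : IsIdempotentElem e) (hf : IsIdempotentElem f)
    (hne : e ≠ 0) (hnf : f ≠ 0)
    (hpe : ∀ a : A, a * a = a → e * a = a → a * e = a → a = 0 ∨ a = e)
    (hpf : ∀ b : B, b * b = b → f * b = b → b * f = b → b = 0 ∨ b = f) :
    ∀ u : A ⊗[k] B, u * u = u → (e ⊗ₜ[k] f) * u = u → u * (e ⊗ₜ[k] f) = u →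
      u = 0 ∨ u = e ⊗ₜ[k] f := by
  classical
  obtain ⟨NA, ta, hNAS, hmulA, hmulA', hdecA, hNAbot⟩ := corner_package (k := k) e he hne hpe
  obtain ⟨NB, tb, hNBS, hmulB, hmulB', hdecB, hNBbot⟩ := corner_package (k := k) f hf hnf hpf
  set SA := cornerSub k e with hSAdef
  set SB := cornerSub k f with hSBdef
  have hSAmul : SA * SA ≤ SA :=
    Submodule.mul_le.2 fun x hx y hy => ⟨by rw [← mul_assoc, hx.1], by rw [mul_assoc, hy.2]⟩
  have hSBmul : SB * SB ≤ SB :=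
    Submodule.mul_le.2 fun x hx y hy => ⟨by rw [← mul_assoc, hx.1], by rw [mul_assoc, hy.2]⟩
  have hSNA : SA * NA ≤ NA := Submodule.mul_le.2 fun r hr x hx => hmulA r hr x hx
  have hNSA : NA * SA ≤ NA := Submodule.mul_le.2 fun x hx r hr => hmulA' x hx r hr
  have hSNB : SB * NB ≤ NB := Submodule.mul_le.2 fun r hr x hx => hmulB r hr x hx
  have hNSB : NB * SB ≤ NB := Submodule.mul_le.2 fun x hx r hr => hmulB' x hx r hr
  have habsA : ∀ j : ℕ, SA * NA ^ (j + 1) ≤ NA ^ (j + 1) := by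
    intro j
    induction j with
    | zero => simpa [pow_one] using hSNA
    | succ j ih =>
      rw [pow_succ, ← mul_assoc]
      exact (mul_le_mul' ih le_rfl).trans (by rw [← pow_succ])
  have habsA' : ∀ j : ℕ, NA ^ (j + 1) * SA ≤ NA ^ (j + 1) := by
    intro j
    induction j with
    | zero => simpa [pow_one] using hNSA
    | succ j ih =>
      rw [pow_succ, mul_assoc]
      exact (mul_le_mul' le_rfl hNSA).trans (by rw [← pow_succ])
  have habsB : ∀ j : ℕ, SB * NB ^ (j + 1) ≤ NB ^ (j + 1) := by
    intro j
    induction j with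
    | zero => simpa [pow_one] using hSNB
    | succ j ih =>
      rw [pow_succ, ← mul_assoc]
      exact (mul_le_mul' ih le_rfl).trans (by rw [← pow_succ])
  have habsB' : ∀ j : ℕ, NB ^ (j + 1) * SB ≤ NB ^ (j + 1) := by
    intro j
    induction j with
    | zero => simpa [pow_one] using hNSB
    | succ j ih =>
      rw [pow_succ, mul_assoc]
      exact (mul_le_mul' le_rfl hNSB).trans (by rw [← pow_succ])
  set dA : ℕ → Submodule k A := fun i => if i = 0 then SA else NA ^ i with hdA
  set dB : ℕ → Submodule k B := fun i => if i = 0 then SB else NB ^ i with hdB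
  have hdAmul : ∀ i j : ℕ, dA i * dA j ≤ dA (i + j) := by
    intro i j
    rcases Nat.eq_zero_or_pos i with rfl | hi
    · rcases Nat.eq_zero_or_pos j with rfl | hj
      · simpa [hdA] using hSAmul
      · obtain ⟨j', rfl⟩ : ∃ j', j = j' + 1 := ⟨j - 1, by omega⟩
        simpa [hdA] using habsA j'
    · rcases Nat.eq_zero_or_pos j with rfl | hj
      · obtain ⟨i', rfl⟩ : ∃ i', i = i' + 1 := ⟨i - 1, by omega⟩
        simpa [hdA] using habsA' i'
      · have hi' : i ≠ 0 := by omega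
        have hj' : j ≠ 0 := by omega
        have hij : i + j ≠ 0 := by omega
        simp only [hdA, if_neg hi', if_neg hj', if_neg hij]
        rw [← pow_add]
  have hdBmul : ∀ i j : ℕ, dB i * dB j ≤ dB (i + j) := by
    intro i j
    rcases Nat.eq_zero_or_pos i with rfl | hi
    · rcases Nat.eq_zero_or_pos j with rfl | hj
      · simpa [hdB] using hSBmul
      · obtain ⟨j', rfl⟩ : ∃ j', j = j' + 1 := ⟨j - 1, by omega⟩
        simpa [hdB] using habsB j'
    · rcases Nat.eq_zero_or_pos j with rfl | hj
      · obtain ⟨i', rfl⟩ : ∃ i', i = i' + 1 := ⟨i - 1, by omega⟩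
        simpa [hdB] using habsB' i'
      · have hi' : i ≠ 0 := by omega
        have hj' : j ≠ 0 := by omega
        have hij : i + j ≠ 0 := by omega
        simp only [hdB, if_neg hi', if_neg hj', if_neg hij]
        rw [← pow_add]
  set W : Submodule k (A ⊗[k] B) := TT NA SB ⊔ TT SA NB with hW
  set F : ℕ → Submodule k (A ⊗[k] B) :=
    fun n => ⨆ (p : ℕ × ℕ) (_ : p.1 + p.2 = n), TT (dA p.1) (dB p.2) with hF
  have hTle : ∀ (p : ℕ × ℕ) (n : ℕ), p.1 + p.2 = n → TT (dA p.1) (dB p.2) ≤ F n := by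
    intro p n hp
    exact le_iSup_of_le p (le_iSup_of_le hp le_rfl)
  have hWF1 : W ≤ F 1 := by
    apply sup_le
    · have h1 : TT NA SB ≤ TT (dA 1) (dB 0) := by
        apply TT_mono
        · simp [hdA, pow_one]
        · simp [hdB]
      exact h1.trans (hTle (1, 0) 1 rfl)
    · have h1 : TT SA NB ≤ TT (dA 0) (dB 1) := by
        apply TT_mono
        · simp [hdA]
        · simp [hdB, pow_one]
      exact h1.trans (hTle (0, 1) 1 rfl)
  have hFmul : ∀ a b : ℕ, F a * F b ≤ F (a + b) := by
    intro a b
    rw [hF]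
    rw [Submodule.iSup_mul]
    apply iSup_le
    intro p
    rw [Submodule.iSup_mul]
    apply iSup_le
    intro hp
    rw [Submodule.mul_iSup]
    apply iSup_le
    intro q
    rw [Submodule.mul_iSup]
    apply iSup_le
    intro hq
    calc TT (dA p.1) (dB p.2) * TT (dA q.1) (dB q.2)
        ≤ TT (dA p.1 * dA q.1) (dB p.2 * dB q.2) := TT_mul
      _ ≤ TT (dA (p.1 + q.1)) (dB (p.2 + q.2)) := TT_mono (hdAmul _ _) (hdBmul _ _)
      _ ≤ F (a + b) := hTle (p.1 + q.1, p.2 + q.2) (a + b) (by simp; omega)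
  have hWFpow : ∀ n : ℕ, W ^ (n + 1) ≤ F (n + 1) := by
    intro n
    induction n with
    | zero => simpa [pow_one] using hWF1
    | succ n ih =>
      rw [pow_succ]
      exact (mul_le_mul' ih hWF1).trans (hFmul (n + 1) 1)
  have hNApow : ∀ i : ℕ, ta + 1 ≤ i → NA ^ i = ⊥ := by
    intro i hi
    obtain ⟨s, rfl⟩ : ∃ s, i = (ta + 1) + s := ⟨i - (ta + 1), by omega⟩
    rw [pow_add, hNAbot, Submodule.bot_mul]
  have hNBpow : ∀ i : ℕ, tb + 1 ≤ i → NB ^ i = ⊥ := by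
    intro i hi
    obtain ⟨s, rfl⟩ : ∃ s, i = (tb + 1) + s := ⟨i - (tb + 1), by omega⟩
    rw [pow_add, hNBbot, Submodule.bot_mul]
  have hFbot : F (ta + tb + 1) ≤ ⊥ := by
    apply iSup_le
    intro p
    apply iSup_le
    intro hp
    rcases le_or_gt (ta + 1) p.1 with h1 | h1
    · have : dA p.1 = ⊥ := by
        have hp1 : p.1 ≠ 0 := by omega
        simp only [hdA, if_neg hp1]
        exact hNApow p.1 h1
      rw [this]
      exact TT_bot_left
    · have h2 : tb + 1 ≤ p.2 := by omega
      have : dB p.2 = ⊥ := by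
        have hp2 : p.2 ≠ 0 := by omega
        simp only [hdB, if_neg hp2]
        exact hNBpow p.2 h2
      rw [this]
      exact TT_bot_right
  have hWbot : W ^ (ta + tb + 1) ≤ ⊥ := (hWFpow (ta + tb)).trans hFbot
  -- E and decomposition of corner elements
  set E : A ⊗[k] B := e ⊗ₜ[k] f with hEdef
  have hEidem : IsIdempotentElem E := by
    show E * E = E
    rw [hEdef, Algebra.TensorProduct.tmul_mul_tmul, he.eq, hf.eq]
  have hdecompT : ∀ z : A ⊗[k] B, E * z * E ∈ Submodule.span k {E} ⊔ W := by
    intro z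
    induction z using TensorProduct.induction_on with
    | zero => simpa using Submodule.zero_mem _
    | tmul a b =>
      have hxy : E * (a ⊗ₜ[k] b) * E = (e * a * e) ⊗ₜ[k] (f * b * f) := by
        rw [hEdef, Algebra.TensorProduct.tmul_mul_tmul, Algebra.TensorProduct.tmul_mul_tmul]
      rw [hxy]
      set x := e * a * e with hxdef
      set y := f * b * f with hydef
      have hxS : x ∈ SA := by
        refine ⟨?_, ?_⟩
        · rw [hxdef, ← mul_assoc, ← mul_assoc, he.eq]
        · rw [hxdef, mul_assoc, he.eq]
      have hyS : y ∈ SB := by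
        refine ⟨?_, ?_⟩
        · rw [hydef, ← mul_assoc, ← mul_assoc, hf.eq]
        · rw [hydef, mul_assoc, hf.eq]
      obtain ⟨lam, hlam⟩ := hdecA x hxS
      obtain ⟨mu, hmu⟩ := hdecB y hyS
      have hid : x ⊗ₜ[k] y = (x - lam • e) ⊗ₜ[k] y + (lam • e) ⊗ₜ[k] (y - mu • f)
          + (lam • e) ⊗ₜ[k] (mu • f) := by
        rw [TensorProduct.sub_tmul, TensorProduct.tmul_sub]
        abel
      rw [hid]
      have heS : e ∈ SA := ⟨he.eq, he.eq⟩
      have h1 : (x - lam • e) ⊗ₜ[k] y ∈ W :=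
        le_sup_left (α := Submodule k (A ⊗[k] B)) (mem_TT hlam hyS)
      have h2 : (lam • e) ⊗ₜ[k] (y - mu • f) ∈ W :=
        le_sup_right (α := Submodule k (A ⊗[k] B)) (mem_TT (SA.smul_mem lam heS) hmu)
      have h3 : (lam • e) ⊗ₜ[k] (mu • f) ∈ Submodule.span k {E} := by
        have h3' : (lam • e) ⊗ₜ[k] (mu • f) = (lam * mu) • (e ⊗ₜ[k] f) := by
          rw [← TensorProduct.smul_tmul', TensorProduct.tmul_smul, smul_smul]
        rw [show (E : A ⊗[k] B) = e ⊗ₜ[k] f from rfl, h3']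
        exact Submodule.smul_mem _ _ (Submodule.mem_span_singleton_self E)
      exact Submodule.add_mem _
        (Submodule.add_mem _ (le_sup_right (a := Submodule.span k {E}) h1)
          (le_sup_right (a := Submodule.span k {E}) h2))
        (le_sup_left (b := W) h3)
    | add z₁ z₂ ih₁ ih₂ =>
      have : E * (z₁ + z₂) * E = E * z₁ * E + E * z₂ * E := by noncomm_ring
      rw [this]
      exact Submodule.add_mem _ ih₁ ih₂
  -- local property of the corner of E
  set Ei : {x : A ⊗[k] B // IsIdempotentElem x} := ⟨E, hEidem⟩ with hEi
  have hlocT : ∀ s : Corner k Ei, ∃ lam : k,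
      IsNilpotent (s - algebraMap k (Corner k Ei) lam) := by
    intro s
    have hs1 : E * s.val = s.val := (Corner.prop Ei s).1
    have hs2 : s.val * E = s.val := (Corner.prop Ei s).2
    have hs3 : E * s.val * E = s.val := by rw [hs1, hs2]
    have hmem := hdecompT s.val
    rw [hs3] at hmem
    obtain ⟨v, hv, w, hw, hvw⟩ := Submodule.mem_sup.1 hmem
    obtain ⟨c, rfl⟩ := Submodule.mem_span_singleton.1 hv
    refine ⟨c, ?_⟩
    have hval : (s - algebraMap k (Corner k Ei) c).val = w := by
      rw [Corner.val_sub, Corner.val_algebraMap]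
      have : (Ei : {x : A ⊗[k] B // IsIdempotentElem x}).1 = E := rfl
      rw [this]
      rw [← hvw]
      abel
    have hwn : w ^ (ta + tb + 1) = 0 := by
      have hmem2 := Submodule.pow_mem_pow W hw (ta + tb + 1)
      have h2 := hWbot hmem2
      simpa using h2
    refine ⟨ta + tb + 1, ?_⟩
    apply Corner.ext
    rw [Corner.val_pow_succ, hval, hwn, Corner.val_zero]
  have hUNT : ∀ s : Corner k Ei, IsUnit s ∨ IsNilpotent s := fun s => lemB hlocT s
  -- conclude
  intro u huu hEu huE
  set uc : Corner k Ei := Corner.mk (k := k) Ei u ⟨hEu, huE⟩ with huc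
  have hucc : uc * uc = uc := by
    apply Corner.ext
    rw [Corner.val_mul]
    exact huu
  rcases hUNT uc with hu | hn
  · right
    have h1 : uc = 1 := hu.mul_left_cancel (by rw [mul_one, hucc])
    have := congrArg (Corner.val Ei) h1
    exact this
  · left
    obtain ⟨n, hn⟩ := hn
    have hpow : ∀ i : ℕ, uc ^ (i + 1) = uc := by
      intro i
      induction i with
      | zero => simp
      | succ i ih => rw [pow_succ, ih, hucc]
    have h0 : uc = 0 := by
      have := hpow n
      rw [pow_succ, hn, zero_mul] at this
      exact this.symm
    have := congrArg (Corner.val Ei) h0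
    exact this

end Main

/-- An idempotent is primitive if it is nonzero and cannot be written as the
sum of two nonzero orthogonal idempotents. -/
def IsPrimitiveIdempotent {R : Type} [Ring R] (e : R) : Prop :=
  IsIdempotentElem e ∧ e ≠ 0 ∧
    ∀ a b : R, IsIdempotentElem a → IsIdempotentElem b →
      a * b = 0 → b * a = 0 → a + b = e → a = 0 ∨ b = 0

/-- A complete set of primitive orthogonal idempotents: pairwise orthogonal
primitive idempotents summing to `1`. -/
def IsCompleteSetOfPrimitiveOrthogonalIdempotents {R : Type} [Ring R]
    {ι : Type} [Fintype ι] (e : ι → R) : Prop :=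
  (∀ i, IsPrimitiveIdempotent (e i)) ∧
    (∀ i j, i ≠ j → e i * e j = 0) ∧ (∑ i, e i = 1)

lemma prim_to_rel {R : Type} [Ring R] {e : R} (h : IsPrimitiveIdempotent e) :
    ∀ a : R, a * a = a → e * a = a → a * e = a → a = 0 ∨ a = e := by
  obtain ⟨he, hne, hp⟩ := h
  intro a ha h1 h2
  have hb : IsIdempotentElem (e - a) := by
    show (e - a) * (e - a) = e - a
    rw [sub_mul, mul_sub, mul_sub, he.eq, h1, h2, ha]
    abel
  have hab : a * (e - a) = 0 := by rw [mul_sub, h2, ha, sub_self]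
  have hba : (e - a) * a = 0 := by rw [sub_mul, h1, ha, sub_self]
  have habe : a + (e - a) = e := by abel
  rcases hp a (e - a) ha hb hab hba habe with h | h
  · exact Or.inl h
  · right
    exact (sub_eq_zero.1 h).symm

lemma rel_to_prim {R : Type} [Ring R] {e : R} (he : IsIdempotentElem e) (hne : e ≠ 0)
    (hrel : ∀ a : R, a * a = a → e * a = a → a * e = a → a = 0 ∨ a = e) :
    IsPrimitiveIdempotent e := by
  refine ⟨he, hne, ?_⟩
  intro a b hia hib hab hba habe
  have h1 : e * a = a := by rw [← habe, add_mul, hia.eq, hba, add_zero]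
  have h2 : a * e = a := by rw [← habe, mul_add, hia.eq, hab, add_zero]
  rcases hrel a hia.eq h1 h2 with h | h
  · exact Or.inl h
  · right
    exact add_left_cancel (show a + b = a + 0 by rw [add_zero, habe, h])

theorem stmt0 (k A B : Type) [Field k] [IsAlgClosed k]
    [Ring A] [Algebra k A] [FiniteDimensional k A]
    [Ring B] [Algebra k B] [FiniteDimensional k B]
    {n m : ℕ} (eA : Fin n → A) (eB : Fin m → B)
    (hA : IsCompleteSetOfPrimitiveOrthogonalIdempotents eA)
    (hB : IsCompleteSetOfPrimitiveOrthogonalIdempotents eB) :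
    IsCompleteSetOfPrimitiveOrthogonalIdempotents
      (fun p : Fin n × Fin m => eA p.1 ⊗ₜ[k] eB p.2) := by
  obtain ⟨hAprim, hAorth, hAsum⟩ := hA
  obtain ⟨hBprim, hBorth, hBsum⟩ := hB
  refine ⟨?_, ?_, ?_⟩
  · rintro ⟨i, j⟩
    obtain ⟨hei, hnei, -⟩ := hAprim i
    obtain ⟨hfj, hnfj, -⟩ := hBprim j
    have hidem : IsIdempotentElem (eA i ⊗ₜ[k] eB j) := by
      show _ * _ = _
      rw [Algebra.TensorProduct.tmul_mul_tmul, hei.eq, hfj.eq]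
    apply rel_to_prim hidem (tmul_ne_zero hnei hnfj)
    exact tensor_rel_prim (eA i) (eB j) hei hfj hnei hnfj
      (prim_to_rel (hAprim i)) (prim_to_rel (hBprim j))
  · rintro ⟨i, j⟩ ⟨i', j'⟩ hne
    simp only [Algebra.TensorProduct.tmul_mul_tmul]
    rcases eq_or_ne i i' with rfl | hii
    · have hjj : j ≠ j' := by
        intro h
        exact hne (by rw [h])
      rw [hBorth j j' hjj, TensorProduct.tmul_zero]
    · rw [hAorth i i' hii, TensorProduct.zero_tmul]
  · rw [Fintype.sum_prod_type]
    have : ∀ i : Fin n, ∑ j : Fin m, eA i ⊗ₜ[k] eB j = eA i ⊗ₜ[k] (1 : B) := by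
      intro i
      rw [← TensorProduct.tmul_sum, hBsum]
    simp only [this]
    rw [← TensorProduct.sum_tmul, hAsum]
    rfl
end

section
/- Let B be a finite-dimensional k-algebra and suppose B is local. Then A ⊗_k B is τ-tilting finite if and only if A is τ-tilting finite, for any finite-dimensional k-algebra A. -/
set_option linter.unusedSectionVars false
set_option maxHeartbeats 1000000

/-- A brick: a (finite-dimensional) module all of whose nonzero endomorphisms
are invertible. -/
def IsBrick (A : Type) [Ring A] (M : ModuleCat.{0} A) : Prop :=
  Module.Finite A M ∧ Nontrivial M ∧ ∀ f : M →ₗ[A] M, f ≠ 0 → Function.Bijective f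

/-- τ-tilting finiteness, via the Demonet–Iyama–Jasso characterization:
there are only finitely many isomorphism classes of bricks. -/
def IsTauTiltingFinite (A : Type) [Ring A] : Prop :=
  ∃ (n : ℕ) (M : Fin n → ModuleCat.{0} A),
    ∀ N : ModuleCat.{0} A, IsBrick A N → ∃ i, Nonempty (N ≃ₗ[A] M i)

/-- A (possibly noncommutative) ring is local if it is nontrivial and for
every element `b`, either `b` or `1 - b` is a unit. -/
def IsLocalAlgebra (B : Type) [Ring B] : Prop :=
  Nontrivial B ∧ ∀ b : B, IsUnit b ∨ IsUnit (1 - b)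


section LocalAlg

variable {k B : Type} [Field k] [Ring B] [Algebra k B] [FiniteDimensional k B]

include k

lemma unit_of_leftinv {w j : B} (h : w * j = 1) : IsUnit j := by
  have hsurj : Function.Surjective (LinearMap.mulRight k j) := fun x =>
    ⟨x * w, by simp [mul_assoc, h]⟩
  have hinj : Function.Injective (LinearMap.mulRight k j) :=
    LinearMap.injective_iff_surjective.2 hsurj
  have h2 : j * w = 1 := by
    have h0 : (j * w - 1) * j = 0 := by
      rw [sub_mul, mul_assoc, h, mul_one, one_mul, sub_self]
    have h1 : LinearMap.mulRight k j (j * w - 1) = LinearMap.mulRight k j 0 := by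
      simpa using h0
    have := hinj h1
    rwa [sub_eq_zero] at this
  exact ⟨⟨j, w, h2, h⟩, rfl⟩

lemma unit_of_rightinv {w j : B} (h : j * w = 1) : IsUnit j := by
  have hsurj : Function.Surjective (LinearMap.mulLeft k j) := fun x =>
    ⟨w * x, by simp [← mul_assoc, h]⟩
  have hinj : Function.Injective (LinearMap.mulLeft k j) :=
    LinearMap.injective_iff_surjective.2 hsurj
  have h2 : w * j = 1 := by
    have h0 : j * (w * j - 1) = 0 := by
      rw [mul_sub, ← mul_assoc, h, one_mul, mul_one, sub_self]
    have h1 : LinearMap.mulLeft k j (w * j - 1) = LinearMap.mulLeft k j 0 := by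
      simpa using h0
    have := hinj h1
    rwa [sub_eq_zero] at this
  exact ⟨⟨j, w, h, h2⟩, rfl⟩

lemma nonunit_mul_left {j : B} (hj : ¬ IsUnit j) (b : B) : ¬ IsUnit (b * j) := by
  intro h
  exact hj (unit_of_leftinv (k := k) (w := (↑h.unit⁻¹ : B) * b)
    (by rw [mul_assoc, IsUnit.val_inv_mul]))

lemma nonunit_mul_right {j : B} (hj : ¬ IsUnit j) (b : B) : ¬ IsUnit (j * b) := by
  intro h
  exact hj (unit_of_rightinv (k := k) (w := b * (↑h.unit⁻¹ : B))
    (by rw [← mul_assoc, IsUnit.mul_val_inv]))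

end LocalAlg

section NU

variable {k B : Type} [Field k] [IsAlgClosed k] [Ring B] [Algebra k B] [FiniteDimensional k B]
  (hB : IsLocalAlgebra B)

variable (k) in
/-- The set of nonunits of a local algebra, as a `k`-submodule. -/
def NU : Submodule k B where
  carrier := {x | ¬ IsUnit x}
  zero_mem' := by
    have := hB.1
    simp
  add_mem' := by
    intro a b ha hb hu
    have h1 : ¬ IsUnit ((↑hu.unit⁻¹ : B) * a) := nonunit_mul_left (k := k) ha _
    have h2 : ¬ IsUnit ((↑hu.unit⁻¹ : B) * b) := nonunit_mul_left (k := k) hb _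
    rcases hB.2 ((↑hu.unit⁻¹ : B) * a) with h | h
    · exact h1 h
    · apply h2
      have : (1 : B) - (↑hu.unit⁻¹ : B) * a = (↑hu.unit⁻¹ : B) * b := by
        have hone : (↑hu.unit⁻¹ : B) * (a + b) = 1 := IsUnit.val_inv_mul hu
        rw [mul_add] at hone
        rw [← hone, add_sub_cancel_left]
      rwa [this] at h
  smul_mem' := by
    intro c x hx hu
    apply nonunit_mul_left (k := k) hx (algebraMap k B c)
    rwa [← Algebra.smul_def]

lemma mem_NU {x : B} : x ∈ NU k hB ↔ ¬ IsUnit x := Iff.rfl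

lemma one_sub_unit {j : B} (hj : j ∈ NU k hB) : IsUnit (1 - j) := (hB.2 j).resolve_left hj

variable (k) in
lemma exists_residue (b : B) : ∃ c : k, b - algebraMap k B c ∈ NU k hB := by
  have hnt := hB.1
  have hint : IsIntegral k b := IsIntegral.of_finite k b
  -- strong induction on the degree of a monic polynomial annihilating b
  suffices H : ∀ n (p : Polynomial k), p.Monic → p.natDegree ≤ n →
      Polynomial.aeval b p = 0 → ∃ c : k, ¬ IsUnit (b - algebraMap k B c) by
    obtain ⟨c, hc⟩ := H (minpoly k b).natDegree (minpoly k b) (minpoly.monic hint)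
      le_rfl (minpoly.aeval k b)
    exact ⟨c, hc⟩
  intro n
  induction n with
  | zero =>
    intro p hp hdeg h0
    exfalso
    have : p = 1 := (Polynomial.Monic.natDegree_eq_zero hp).1 (Nat.le_zero.1 hdeg)
    rw [this] at h0
    simp at h0
  | succ n ih =>
    intro p hp hdeg h0
    by_cases hd : p.natDegree = 0
    · exfalso
      have : p = 1 := (Polynomial.Monic.natDegree_eq_zero hp).1 hd
      rw [this] at h0
      simp at h0
    · obtain ⟨c, hc⟩ := IsAlgClosed.exists_root (k := k) p (by
        intro h
        exact hd (Polynomial.natDegree_eq_zero_iff_degree_le_zero.2 (le_of_eq h)))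
      have hdvd : Polynomial.X - Polynomial.C c ∣ p := Polynomial.dvd_iff_isRoot.2 hc
      obtain ⟨q, hq⟩ := hdvd
      have hqm : q.Monic :=
        Polynomial.Monic.of_mul_monic_left (Polynomial.monic_X_sub_C c) (hq ▸ hp)
      by_cases hu : IsUnit (b - algebraMap k B c)
      · have haq : Polynomial.aeval b q = 0 := by
          have h1 : (b - algebraMap k B c) * Polynomial.aeval b q = 0 := by
            have := h0
            rw [hq, map_mul] at this
            simpa using this
          have h2 := congrArg (fun z => (↑hu.unit⁻¹ : B) * z) h1
          simpa [← mul_assoc, IsUnit.val_inv_mul] using h2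
        apply ih q hqm _ haq
        have hdq : q.natDegree + 1 = p.natDegree := by
          rw [hq, Polynomial.natDegree_mul (Polynomial.X_sub_C_ne_zero c) hqm.ne_zero,
            Polynomial.natDegree_X_sub_C]
          omega
        omega
      · exact ⟨c, hu⟩

end NU

section Char

variable {k B : Type} [Field k] [IsAlgClosed k] [Ring B] [Algebra k B] [FiniteDimensional k B]
  (hB : IsLocalAlgebra B)

lemma residue_unique {b : B} {c₁ c₂ : k} (h1 : b - algebraMap k B c₁ ∈ NU k hB)
    (h2 : b - algebraMap k B c₂ ∈ NU k hB) : c₁ = c₂ := by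
  by_contra hne
  have hmem : algebraMap k B (c₁ - c₂) ∈ NU k hB := by
    have := Submodule.sub_mem _ h2 h1
    simpa [sub_sub_sub_cancel_left, ← map_sub] using this
  exact hmem (((isUnit_iff_ne_zero).2 (sub_ne_zero.2 hne)).map (algebraMap k B))

variable (k) in
/-- The residue character of a finite-dimensional local algebra over an
algebraically closed field. -/
noncomputable def resChar : B →ₐ[k] k where
  toFun b := Classical.choose (exists_residue k hB b)
  map_one' := residue_unique hB (Classical.choose_spec (exists_residue k hB 1))
      (by simpa using (NU k hB).zero_mem)
  map_zero' := residue_unique hB (Classical.choose_spec (exists_residue k hB 0))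
      (by simpa using (NU k hB).zero_mem)
  map_mul' := by
    intro x y
    set cx := Classical.choose (exists_residue k hB x) with hcx
    set cy := Classical.choose (exists_residue k hB y) with hcy
    have hx : x - algebraMap k B cx ∈ NU k hB := Classical.choose_spec (exists_residue k hB x)
    have hy : y - algebraMap k B cy ∈ NU k hB := Classical.choose_spec (exists_residue k hB y)
    refine residue_unique hB (Classical.choose_spec (exists_residue k hB (x * y))) ?_
    have key : x * y - algebraMap k B (cx * cy)
        = x * (y - algebraMap k B cy) + (x - algebraMap k B cx) * algebraMap k B cy := by
      rw [map_mul]; noncomm_ring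
    rw [key]
    refine Submodule.add_mem _ ?_ ?_
    · exact nonunit_mul_left (k := k) hy x
    · exact nonunit_mul_right (k := k) hx _
  map_add' := by
    intro x y
    set cx := Classical.choose (exists_residue k hB x)
    set cy := Classical.choose (exists_residue k hB y)
    have hx : x - algebraMap k B cx ∈ NU k hB := Classical.choose_spec (exists_residue k hB x)
    have hy : y - algebraMap k B cy ∈ NU k hB := Classical.choose_spec (exists_residue k hB y)
    refine residue_unique hB (Classical.choose_spec (exists_residue k hB (x + y))) ?_
    have key : x + y - algebraMap k B (cx + cy)
        = (x - algebraMap k B cx) + (y - algebraMap k B cy) := by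
      rw [map_add]; abel
    rw [key]
    exact Submodule.add_mem _ hx hy
  commutes' := by
    intro c
    refine residue_unique hB (Classical.choose_spec (exists_residue k hB (algebraMap k B c))) ?_
    simpa using (NU k hB).zero_mem

lemma resChar_spec (b : B) : b - algebraMap k B (resChar k hB b) ∈ NU k hB := by
  show b - algebraMap k B (Classical.choose (exists_residue k hB b)) ∈ NU k hB
  exact Classical.choose_spec (exists_residue k hB b)

end Char

section Nakayama

variable {k B : Type} [Field k] [IsAlgClosed k] [Ring B] [Algebra k B] [FiniteDimensional k B]
  (hB : IsLocalAlgebra B)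

lemma NU_mul_le : NU k hB * NU k hB ≤ NU k hB :=
  Submodule.mul_le.2 fun m _ n hn => nonunit_mul_left (k := k) hn m

lemma NU_pow_le : ∀ t, 1 ≤ t → NU k hB ^ t ≤ NU k hB := by
  intro t
  induction t with
  | zero => omega
  | succ t ih =>
    intro _
    by_cases ht : 1 ≤ t
    · rw [pow_succ]
      exact le_trans (mul_le_mul' (ih ht) le_rfl) (NU_mul_le hB)
    · have : t = 0 := by omega
      subst this
      rw [pow_one]

lemma NU_pow_succ_le : ∀ t, 1 ≤ t → NU k hB ^ (t + 1) ≤ NU k hB ^ t := by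
  intro t
  induction t with
  | zero => omega
  | succ t ih =>
    intro _
    by_cases ht : 1 ≤ t
    · rw [pow_succ (NU k hB) (t + 1), pow_succ (NU k hB) t]
      exact mul_le_mul' (ih ht) le_rfl
    · have : t = 0 := by omega
      subst this
      rw [pow_succ, pow_one]
      exact NU_mul_le hB

/-- Nakayama-type lemma for the ideal of nonunits. -/
lemma nakayama (V : Submodule k B) (hV : V ≤ NU k hB * V) : V = ⊥ := by
  classical
  haveI : IsNoetherian k B := inferInstance
  obtain ⟨s, hs⟩ : V.FG := IsNoetherian.noetherian V
  suffices H : ∀ n (s : Finset B), s.card ≤ n → (↑s : Set B) ⊆ ↑V →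
      V ≤ (Submodule.span B (↑s : Set B)).restrictScalars k → V = ⊥ by
    refine H s.card s le_rfl ?_ ?_
    · rw [← hs]; exact Submodule.subset_span
    · rw [← hs]
      rw [Submodule.span_le]
      exact fun x hx => Submodule.subset_span hx
  intro n
  induction n with
  | zero =>
    intro s hcard _ hspan
    have : s = ∅ := Finset.card_eq_zero.1 (Nat.le_zero.1 hcard)
    subst this
    simp only [Finset.coe_empty, Submodule.span_empty] at hspan
    exact le_bot_iff.1 (fun x hx => hspan hx)
  | succ n ih =>
    intro s hcard hsub hspan
    rcases s.eq_empty_or_nonempty with rfl | ⟨v, hv⟩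
    · simp only [Finset.coe_empty, Submodule.span_empty] at hspan
      exact le_bot_iff.1 (fun x hx => hspan hx)
    · -- v ∈ V, hence v ∈ NU * V, get coefficients in NU
      have hvV : v ∈ V := hsub hv
      have hvNU : v ∈ NU k hB * V := hV hvV
      have hco : ∀ x ∈ NU k hB * V, ∃ c : B → B,
          (∀ u, c u ∈ NU k hB) ∧ x = ∑ u ∈ s, c u * u := by
        intro x hx
        refine Submodule.mul_induction_on hx ?_ ?_
        · intro j hj w hw
          have hw' : w ∈ Submodule.span B (↑s : Set B) := hspan hw
          obtain ⟨f, -, hf⟩ := Submodule.mem_span_finset.1 hw'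
          refine ⟨fun u => j * f u, fun u => by
            exact fun h => (nonunit_mul_right (k := k) hj (f u)) h, ?_⟩
          rw [← hf, Finset.mul_sum]
          congr 1
          ext u
          rw [smul_eq_mul, mul_assoc]
        · rintro x y ⟨cx, hcx, rfl⟩ ⟨cy, hcy, rfl⟩
          exact ⟨fun u => cx u + cy u, fun u => Submodule.add_mem _ (hcx u) (hcy u),
            by rw [← Finset.sum_add_distrib]; congr 1; ext u; rw [add_mul]⟩
      obtain ⟨c, hc, hcv⟩ := hco v hvNU
      -- (1 - c v) * v lies in span of s.erase v
      have hcv' : c v * v + ∑ u ∈ s.erase v, c u * u = v := by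
        rw [Finset.add_sum_erase s (fun u => c u * u) hv]
        exact hcv.symm
      have hsum : (1 - c v) * v = ∑ u ∈ s.erase v, c u * u := by
        rw [sub_mul, one_mul]
        exact (eq_sub_of_add_eq' hcv').symm
      have hu : IsUnit (1 - c v) := one_sub_unit hB (hc v)
      have hvmem : v ∈ Submodule.span B (↑(s.erase v) : Set B) := by
        have hsummem : ∑ u ∈ s.erase v, c u * u ∈ Submodule.span B (↑(s.erase v) : Set B) := by
          refine Submodule.sum_mem _ fun u hu' => ?_
          have : u ∈ Submodule.span B (↑(s.erase v) : Set B) :=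
            Submodule.subset_span (by exact_mod_cast hu')
          simpa [smul_eq_mul] using Submodule.smul_mem _ (c u) this
        have hinv : (↑hu.unit⁻¹ : B) * (1 - c v) = 1 := by
          have := IsUnit.val_inv_mul hu
          simpa using this
        have hveq : v = (↑hu.unit⁻¹ : B) * (∑ u ∈ s.erase v, c u * u) := by
          rw [← hsum, ← mul_assoc, hinv, one_mul]
        have hfinal := Submodule.smul_mem (Submodule.span B (↑(s.erase v) : Set B))
          ((↑hu.unit⁻¹ : B)) hsummem
        rw [smul_eq_mul, ← hveq] at hfinal
        exact hfinal
      refine ih (s.erase v) ?_ ?_ ?_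
      · have := Finset.card_erase_of_mem hv
        omega
      · exact fun x hx => hsub (Finset.erase_subset _ _ hx)
      · refine le_trans hspan ?_
        intro x hx
        simp only [Submodule.restrictScalars_mem] at hx ⊢
        refine Submodule.span_le.2 ?_ hx
        intro u hu'
        by_cases h : u = v
        · subst h
          exact hvmem
        · exact Submodule.subset_span
            (Finset.mem_coe.2 (Finset.mem_erase.2 ⟨h, Finset.mem_coe.1 hu'⟩))

end Nakayama

section Nilpotent

variable {k B : Type} [Field k] [IsAlgClosed k] [Ring B] [Algebra k B] [FiniteDimensional k B]
  (hB : IsLocalAlgebra B)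

variable (k) in
lemma NU_pow_eq_bot : ∃ n, 1 ≤ n ∧ NU k hB ^ n = ⊥ := by
  set d : ℕ → ℕ := fun n => Module.finrank k (NU k hB ^ (n + 1) : Submodule k B) with hd
  have hstab : ∃ m, d m ≤ d (m + 1) := by
    by_contra hcon
    push_neg at hcon
    have hdesc : ∀ m, d m + m ≤ d 0 := by
      intro m
      induction m with
      | zero => omega
      | succ m ih =>
        have := hcon m
        omega
    have := hdesc (d 0 + 1)
    omega
  obtain ⟨m, hm⟩ := hstab
  have hle : NU k hB ^ (m + 2) ≤ NU k hB ^ (m + 1) := NU_pow_succ_le hB (m + 1) (by omega)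
  have heq : NU k hB ^ (m + 2) = NU k hB ^ (m + 1) :=
    Submodule.eq_of_le_of_finrank_le hle hm
  refine ⟨m + 1, by omega, nakayama hB _ ?_⟩
  have : NU k hB * NU k hB ^ (m + 1) = NU k hB ^ (m + 2) := (pow_succ' (NU k hB) (m + 1)).symm
  rw [← this] at heq
  exact le_of_eq heq.symm

end Nilpotent

section Transfer

variable {R S : Type} [Ring R] [Ring S]

/-- Transport a linear equivalence along restriction of scalars. -/
def equivRestrict (h : R →+* S) {M N : ModuleCat.{0} S} (e : M ≃ₗ[S] N) :
    ((ModuleCat.restrictScalars h).obj M) ≃ₗ[R] ((ModuleCat.restrictScalars h).obj N) where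
  toFun := e
  invFun := e.symm
  map_add' := e.map_add
  map_smul' := fun r m => e.map_smul (h r) m
  left_inv := e.left_inv
  right_inv := e.right_inv

variable (f : R →+* S) (g : S →+* R)

lemma brick_restrict (hfg : ∀ s, f (g s) = s) (M : ModuleCat.{0} S) (h : IsBrick S M) :
    IsBrick R ((ModuleCat.restrictScalars f).obj M) := by
  obtain ⟨hfin, hnt, hend⟩ := h
  refine ⟨?_, hnt, ?_⟩
  · obtain ⟨s, hs⟩ := hfin.fg_top
    refine ⟨⟨s, ?_⟩⟩
    rw [eq_top_iff]
    intro x _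
    have hx : x ∈ Submodule.span S (↑s : Set M) := by rw [hs]; trivial
    refine Submodule.span_induction
      (p := fun y _ => y ∈ Submodule.span R (show Set ((ModuleCat.restrictScalars f).obj M) from (↑s : Set M)))
      ?_ ?_ ?_ ?_ hx
    · exact fun y hy => Submodule.subset_span hy
    · exact Submodule.zero_mem _
    · exact fun y z _ _ hy hz => Submodule.add_mem _ hy hz
    · intro a y _ hy
      have : a • y = (g a) • (y : (ModuleCat.restrictScalars f).obj M) := by
        show a • y = f (g a) • y
        rw [hfg]
      have h' := Submodule.smul_mem _ (g a) hy
      rw [← this] at h'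
      exact h'
  · intro φ hφ
    let φS : M →ₗ[S] M :=
      { toFun := φ
        map_add' := φ.map_add
        map_smul' := by
          intro a m
          have h2 := φ.map_smul (g a) m
          have h3 : φ (f (g a) • m) = f (g a) • (show M from φ m) := h2
          rw [hfg] at h3
          exact h3 }
    have : φS ≠ 0 := by
      intro h0
      apply hφ
      ext m
      have := congrFun (congrArg DFunLike.coe h0) m
      exact this
    exact hend φS this

end Transfer

section Transfer2

variable {R S : Type} [Ring R] [Ring S] (f : R →+* S) (g : S →+* R)

lemma brick_corestrict (hfg : ∀ s, f (g s) = s) (M : ModuleCat.{0} R) (h : IsBrick R M)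
    (hkey : ∀ (x : R) (m : M), x • m = (g (f x)) • m) :
    IsBrick S ((ModuleCat.restrictScalars g).obj M) := by
  obtain ⟨hfin, hnt, hend⟩ := h
  refine ⟨?_, hnt, ?_⟩
  · obtain ⟨s, hs⟩ := hfin.fg_top
    refine ⟨⟨s, ?_⟩⟩
    rw [eq_top_iff]
    intro x _
    have hx : x ∈ Submodule.span R (↑s : Set M) := by rw [hs]; trivial
    refine Submodule.span_induction
      (p := fun y _ => y ∈ Submodule.span S (show Set ((ModuleCat.restrictScalars g).obj M) from (↑s : Set M)))
      ?_ ?_ ?_ ?_ hx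
    · exact fun y hy => Submodule.subset_span hy
    · exact Submodule.zero_mem _
    · exact fun y z _ _ hy hz => Submodule.add_mem _ hy hz
    · intro a y _ hy
      have : a • y = (f a) • (y : (ModuleCat.restrictScalars g).obj M) := by
        show a • y = g (f a) • y
        exact hkey a y
      have h' := Submodule.smul_mem _ (f a) hy
      rw [← this] at h'
      exact h'
  · intro φ hφ
    let φR : M →ₗ[R] M :=
      { toFun := φ
        map_add' := φ.map_add
        map_smul' := by
          intro a m
          have h2 := φ.map_smul (f a) m
          have h3 : φ (g (f a) • m) = g (f a) • (show M from φ m) := h2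
          rw [← hkey, ← hkey] at h3
          exact h3 }
    have : φR ≠ 0 := by
      intro h0
      apply hφ
      ext m
      have := congrFun (congrArg DFunLike.coe h0) m
      exact this
    exact hend φR this

/-- The identity as an equivalence between `M` and its double restriction. -/
def doubleRestrictEquiv (M : ModuleCat.{0} R)
    (hkey : ∀ (x : R) (m : M), x • m = (g (f x)) • m) :
    M ≃ₗ[R] ((ModuleCat.restrictScalars f).obj ((ModuleCat.restrictScalars g).obj M)) where
  toFun := fun m => m
  invFun := fun m => m
  map_add' := fun _ _ => rfl
  map_smul' := fun x m => hkey x m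
  left_inv := fun _ => rfl
  right_inv := fun _ => rfl

/-- The identity as an equivalence between `N` and its double restriction. -/
def doubleRestrictEquiv' (hfg : ∀ s, f (g s) = s) (N : ModuleCat.{0} S) :
    N ≃ₗ[S] ((ModuleCat.restrictScalars g).obj ((ModuleCat.restrictScalars f).obj N)) where
  toFun := fun m => m
  invFun := fun m => m
  map_add' := fun _ _ => rfl
  map_smul' := fun x m => by
    show x • m = f (g x) • m
    rw [hfg]
  left_inv := fun _ => rfl
  right_inv := fun _ => rfl

theorem ttf_transfer (hfg : ∀ s, f (g s) = s)
    (hkey : ∀ (M : ModuleCat.{0} R), IsBrick R M → ∀ (x : R) (m : M), x • m = (g (f x)) • m) :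
    IsTauTiltingFinite R ↔ IsTauTiltingFinite S := by
  constructor
  · rintro ⟨n, M, hM⟩
    refine ⟨n, fun i => (ModuleCat.restrictScalars g).obj (M i), ?_⟩
    intro N hN
    obtain ⟨i, ⟨e⟩⟩ := hM ((ModuleCat.restrictScalars f).obj N) (brick_restrict f g hfg N hN)
    exact ⟨i, ⟨(doubleRestrictEquiv' f g hfg N).trans (equivRestrict g e)⟩⟩
  · rintro ⟨n, M, hM⟩
    refine ⟨n, fun i => (ModuleCat.restrictScalars f).obj (M i), ?_⟩
    intro N hN
    obtain ⟨i, ⟨e⟩⟩ := hM ((ModuleCat.restrictScalars g).obj N)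
      (brick_corestrict f g hfg N hN (hkey N hN))
    exact ⟨i, ⟨(doubleRestrictEquiv f g N (hkey N hN)).trans (equivRestrict f e)⟩⟩

end Transfer2

section Tensor

variable {k A B : Type} [Field k] [IsAlgClosed k]
  [Ring A] [Algebra k A] [FiniteDimensional k A]
  [Ring B] [Algebra k B] [FiniteDimensional k B]
  (hB : IsLocalAlgebra B)

open scoped TensorProduct

lemma brick_tensor_kill (M : ModuleCat.{0} (TensorProduct k A B))
    (hM : IsBrick (TensorProduct k A B) M) :
    ∀ j ∈ NU k hB, ∀ m : M, (((1:A) ⊗ₜ[k] j : TensorProduct k A B)) • m = 0 := by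
  obtain ⟨n₀, hn₀, hbot⟩ := NU_pow_eq_bot k hB
  -- auxiliary: killing by 1 ⊗ u implies killing by a ⊗ u
  have haux : ∀ (t : ℕ), (∀ j ∈ NU k hB ^ t, ∀ m : M,
        (((1:A) ⊗ₜ[k] j : TensorProduct k A B)) • m = 0) →
      ∀ (a : A), ∀ u ∈ NU k hB ^ t, ∀ m : M,
        ((a ⊗ₜ[k] u : TensorProduct k A B)) • m = 0 := by
    intro t hP a u hu m
    have : ((a ⊗ₜ[k] u : TensorProduct k A B))
        = (a ⊗ₜ[k] (1:B)) * ((1:A) ⊗ₜ[k] u) := by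
      rw [Algebra.TensorProduct.tmul_mul_tmul, mul_one, one_mul]
    rw [this, mul_smul, hP u hu m, smul_zero]
  -- the inductive step
  have step : ∀ t, 1 ≤ t →
      (∀ j ∈ NU k hB ^ (t + 1), ∀ m : M,
        (((1:A) ⊗ₜ[k] j : TensorProduct k A B)) • m = 0) →
      ∀ j ∈ NU k hB ^ t, ∀ m : M,
        (((1:A) ⊗ₜ[k] j : TensorProduct k A B)) • m = 0 := by
    intro t ht hP1 j hj
    let φ : M →ₗ[TensorProduct k A B] M :=
      { toFun := fun m => (((1:A) ⊗ₜ[k] j : TensorProduct k A B)) • m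
        map_add' := fun x y => smul_add _ x y
        map_smul' := by
          intro x m
          simp only [RingHom.id_apply]
          induction x using TensorProduct.induction_on with
          | zero => rw [zero_smul, zero_smul, smul_zero]
          | add x y hx hy => rw [add_smul, add_smul, smul_add, hx, hy]
          | tmul a b =>
            set c := resChar k hB b with hc
            set j' := b - algebraMap k B c with hj'def
            have hj' : j' ∈ NU k hB := resChar_spec hB b
            have hb : b = algebraMap k B c + j' := by rw [hj'def]; abel
            have hdiff : j * b - b * j = j * j' - j' * j := by
              rw [hb, mul_add, add_mul, ← Algebra.commutes c j]
              abel
            have hm1 : j * j' ∈ NU k hB ^ (t + 1) := by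
              rw [pow_succ]
              exact Submodule.mul_mem_mul hj hj'
            have hm2 : j' * j ∈ NU k hB ^ (t + 1) := by
              rw [pow_succ']
              exact Submodule.mul_mem_mul hj' hj
            have e1 := haux (t+1) hP1 a (j * j') hm1 m
            have e2 := haux (t+1) hP1 a (j' * j) hm2 m
            have goal0 : (((1:A) ⊗ₜ[k] j : TensorProduct k A B)) • ((a ⊗ₜ[k] b) • m)
                - (a ⊗ₜ[k] b) • ((((1:A) ⊗ₜ[k] j : TensorProduct k A B)) • m) = 0 := by
              rw [← mul_smul, ← mul_smul, Algebra.TensorProduct.tmul_mul_tmul,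
                Algebra.TensorProduct.tmul_mul_tmul, one_mul, mul_one, ← sub_smul,
                ← TensorProduct.tmul_sub, hdiff, TensorProduct.tmul_sub, sub_smul,
                e1, e2, sub_zero]
            exact sub_eq_zero.1 goal0 }
    have hsq : ∀ m : M, φ (φ m) = 0 := by
      intro m
      show (((1:A) ⊗ₜ[k] j : TensorProduct k A B)) •
        ((((1:A) ⊗ₜ[k] j : TensorProduct k A B)) • m) = 0
      rw [← mul_smul, Algebra.TensorProduct.tmul_mul_tmul, one_mul]
      have : j * j ∈ NU k hB ^ (t + 1) := by
        rw [pow_succ]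
        exact Submodule.mul_mem_mul hj (NU_pow_le hB t ht hj)
      exact hP1 _ this m
    have hφ0 : φ = 0 := by
      by_contra hne
      have hbij := hM.2.2 φ hne
      apply hne
      ext m
      have h0 : φ (φ m) = φ 0 := by rw [hsq m, map_zero]
      have := hbij.injective h0
      simpa using this
    intro m
    have := congrFun (congrArg DFunLike.coe hφ0) m
    exact this
  -- downward induction from n₀
  have base : ∀ t, n₀ ≤ t → ∀ j ∈ NU k hB ^ t, ∀ m : M,
      (((1:A) ⊗ₜ[k] j : TensorProduct k A B)) • m = 0 := by
    intro t hle j hj m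
    have hbot' : NU k hB ^ t = ⊥ := by
      obtain ⟨r, rfl⟩ := Nat.exists_eq_add_of_le hle
      rw [pow_add, hbot, Submodule.bot_mul]
    rw [hbot'] at hj
    have : j = 0 := hj
    rw [this, TensorProduct.tmul_zero, zero_smul]
  have all : ∀ s t, 1 ≤ t → n₀ ≤ t + s → ∀ j ∈ NU k hB ^ t, ∀ m : M,
      (((1:A) ⊗ₜ[k] j : TensorProduct k A B)) • m = 0 := by
    intro s
    induction s with
    | zero => intro t ht hle; exact base t (by omega)
    | succ s ih =>
      intro t ht hle
      by_cases h : n₀ ≤ t + s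
      · exact ih t ht h
      · exact step t ht (ih (t+1) (by omega) (by omega))
  have := all n₀ 1 le_rfl (by omega)
  intro j hj m
  exact this j (by rwa [pow_one]) m

end Tensor

section Main

variable {k A B : Type} [Field k] [IsAlgClosed k]
  [Ring A] [Algebra k A] [FiniteDimensional k A]
  [Ring B] [Algebra k B] [FiniteDimensional k B]
  (hB : IsLocalAlgebra B)

open scoped TensorProduct

variable (k A) in
/-- The projection `A ⊗ B → A` induced by the residue character of `B`. -/
noncomputable def projTensor : TensorProduct k A B →ₐ[k] A :=
  Algebra.TensorProduct.lift (AlgHom.id k A) ((Algebra.ofId k A).comp (resChar k hB))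
    (fun x y => by
      show _ * _ = _ * _
      simp only [AlgHom.coe_comp, Function.comp_apply, AlgHom.coe_id, id_eq]
      rw [Algebra.ofId_apply]
      exact (Algebra.commutes _ _).symm)

lemma projTensor_tmul (a : A) (b : B) :
    projTensor k A hB (a ⊗ₜ[k] b) = a * algebraMap k A (resChar k hB b) := by
  rw [projTensor, Algebra.TensorProduct.lift_tmul]
  simp [Algebra.ofId_apply]

lemma projTensor_includeLeft (a : A) :
    projTensor k A hB ((Algebra.TensorProduct.includeLeft : A →ₐ[k] TensorProduct k A B) a)
      = a := by
  have : (Algebra.TensorProduct.includeLeft : A →ₐ[k] TensorProduct k A B) a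
      = a ⊗ₜ[k] (1:B) := rfl
  rw [this, projTensor_tmul, map_one, map_one, mul_one]

lemma tensor_hkey (M : ModuleCat.{0} (TensorProduct k A B))
    (hM : IsBrick (TensorProduct k A B) M) (x : TensorProduct k A B) (m : M) :
    x • m = ((projTensor k A hB x ⊗ₜ[k] (1:B) : TensorProduct k A B)) • m := by
  have kill1 := brick_tensor_kill hB M hM
  induction x using TensorProduct.induction_on with
  | zero => rw [zero_smul, map_zero, TensorProduct.zero_tmul, zero_smul]
  | add x y hx hy =>
    rw [add_smul, map_add, TensorProduct.add_tmul, add_smul, hx, hy]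
  | tmul a b =>
    set c := resChar k hB b with hc
    set j' := b - algebraMap k B c with hj'def
    have hj' : j' ∈ NU k hB := resChar_spec hB b
    have hb : b = algebraMap k B c + j' := by rw [hj'def]; abel
    have hkill : ((a ⊗ₜ[k] j' : TensorProduct k A B)) • m = 0 := by
      have : ((a ⊗ₜ[k] j' : TensorProduct k A B))
          = (a ⊗ₜ[k] (1:B)) * ((1:A) ⊗ₜ[k] j') := by
        rw [Algebra.TensorProduct.tmul_mul_tmul, mul_one, one_mul]
      rw [this, mul_smul, kill1 j' hj' m, smul_zero]
    have e : (a ⊗ₜ[k] (algebraMap k B c) : TensorProduct k A B)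
        = ((a * algebraMap k A c) ⊗ₜ[k] (1:B) : TensorProduct k A B) := by
      rw [Algebra.algebraMap_eq_smul_one (A := B), TensorProduct.tmul_smul]
      have : a * algebraMap k A c = c • a := by
        rw [Algebra.smul_def, Algebra.commutes]
      rw [this, TensorProduct.smul_tmul']
    calc (a ⊗ₜ[k] b : TensorProduct k A B) • m
        = ((a ⊗ₜ[k] (algebraMap k B c) : TensorProduct k A B)
            + (a ⊗ₜ[k] j' : TensorProduct k A B)) • m := by
          rw [← TensorProduct.tmul_add, ← hb]
      _ = ((a ⊗ₜ[k] (algebraMap k B c) : TensorProduct k A B)) • m := by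
          rw [add_smul, hkill, add_zero]
      _ = ((projTensor k A hB (a ⊗ₜ[k] b) ⊗ₜ[k] (1:B) : TensorProduct k A B)) • m := by
          rw [e, projTensor_tmul]

end Main

theorem stmt17 (k A B : Type) [Field k] [IsAlgClosed k]
    [Ring A] [Algebra k A] [FiniteDimensional k A]
    [Ring B] [Algebra k B] [FiniteDimensional k B]
    (hB : IsLocalAlgebra B) :
    IsTauTiltingFinite (TensorProduct k A B) ↔ IsTauTiltingFinite A := by
  refine ttf_transfer (projTensor k A hB).toRingHom
    (Algebra.TensorProduct.includeLeft : A →ₐ[k] TensorProduct k A B).toRingHom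
    (fun a => projTensor_includeLeft hB a) ?_
  intro M hM x m
  have := tensor_hkey hB M hM x m
  exact this
end
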